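/- Let η, τ ∈ ℝ with η > 0, and let V = (τ/2)·χ_{(-η,η)}. Set u(t) = |η V(ηt)|^{1/2}, v(t) = sign(V(ηt)) u(t), and let K_V be the operator on L²(ℝ) with kernel (i/2) u(t) sign(t-s) v(s). If |τ|η < π, then ∑_{n=0}^∞ ∫_ℝ v(t) (K_V^{2n} u)(t) dt = 2 tan(τη/2). -/

import Mathlib

open MeasureTheory

/-- The integral operator `K_V f(t) = (i/2) ∫ u(t) sign(t-s) v(s) f(s) ds`. -/
noncomputable def Kop (u v : ℝ → ℝ) (f : ℝ → ℂ) : ℝ → ℂ :=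
  fun t => Complex.I / 2 * ∫ s, ((u t * Real.sign (t - s) * v s : ℝ) : ℂ) * f s

open Real intervalIntegral

noncomputable def Qop (g : ℝ → ℝ) : ℝ → ℝ :=
  fun t => ∫ s in t..(1:ℝ), ∫ r in (0:ℝ)..s, g r

lemma Qop_cont {g : ℝ → ℝ} (hg : Continuous g) : Continuous (Qop g) := by
  have hH : Continuous (fun s => ∫ r in (0:ℝ)..s, g r) :=
    intervalIntegral.continuous_primitive (fun a b => hg.intervalIntegrable a b) 0
  have : Continuous (fun t => ∫ s in (1:ℝ)..t, ∫ r in (0:ℝ)..s, g r) :=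
    intervalIntegral.continuous_primitive (fun a b => hH.intervalIntegrable a b) 1
  have h2 : Qop g = fun t => -(∫ s in (1:ℝ)..t, ∫ r in (0:ℝ)..s, g r) := by
    funext t; rw [Qop, intervalIntegral.integral_symm]
  rw [h2]; exact this.neg

lemma primitive_odd {g : ℝ → ℝ} (hg : ∀ t, g (-t) = g t) (s : ℝ) :
    (∫ r in (0:ℝ)..(-s), g r) = -∫ r in (0:ℝ)..s, g r := by
  have h := intervalIntegral.integral_comp_neg (a := s) (b := (0:ℝ)) g
  rw [neg_zero] at h
  rw [← h]
  have : (fun x => g (-x)) = g := funext hg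
  rw [this, intervalIntegral.integral_symm]

lemma Qop_even {g : ℝ → ℝ} (hg : Continuous g) (he : ∀ t, g (-t) = g t) (t : ℝ) :
    Qop g (-t) = Qop g t := by
  have hH : Continuous (fun s => ∫ r in (0:ℝ)..s, g r) :=
    intervalIntegral.continuous_primitive (fun a b => hg.intervalIntegrable a b) 0
  have hsplit : Qop g (-t) = (∫ s in (-t)..t, ∫ r in (0:ℝ)..s, g r) + Qop g t := by
    rw [Qop, Qop,
      intervalIntegral.integral_add_adjacent_intervals (hH.intervalIntegrable _ _)
        (hH.intervalIntegrable _ _)]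
  have hzero : (∫ s in (-t)..t, ∫ r in (0:ℝ)..s, g r) = 0 := by
    have h := intervalIntegral.integral_comp_neg (a := -t) (b := t)
      (fun s => ∫ r in (0:ℝ)..s, g r)
    rw [neg_neg] at h
    have h2 : (fun x => ∫ r in (0:ℝ)..(-x), g r) = (fun x => -∫ r in (0:ℝ)..x, g r) := by
      funext x; exact primitive_odd he x
    rw [h2, intervalIntegral.integral_neg] at h
    linarith [h]
  rw [hsplit, hzero, zero_add]

lemma Qop_nonneg {g : ℝ → ℝ} (hg : Continuous g)
    (h0 : ∀ t ∈ Set.Icc (0:ℝ) 1, 0 ≤ g t) {t : ℝ} (ht : t ∈ Set.Icc (0:ℝ) 1) :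
    0 ≤ Qop g t := by
  apply intervalIntegral.integral_nonneg ht.2
  intro s hs
  apply intervalIntegral.integral_nonneg (le_trans ht.1 hs.1)
  intro r hr
  exact h0 r ⟨hr.1, le_trans hr.2 hs.2⟩

lemma Qop_mono {g h : ℝ → ℝ} (hg : Continuous g) (hh : Continuous h)
    (hle : ∀ t ∈ Set.Icc (0:ℝ) 1, g t ≤ h t) {t : ℝ} (ht : t ∈ Set.Icc (0:ℝ) 1) :
    Qop g t ≤ Qop h t := by
  apply intervalIntegral.integral_mono_on ht.2
    ((intervalIntegral.continuous_primitive (fun a b => hg.intervalIntegrable a b) 0).intervalIntegrable _ _)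
    ((intervalIntegral.continuous_primitive (fun a b => hh.intervalIntegrable a b) 0).intervalIntegrable _ _)
  intro s hs
  apply intervalIntegral.integral_mono_on (le_trans ht.1 hs.1)
    (hg.intervalIntegrable _ _) (hh.intervalIntegrable _ _)
  intro r hr
  exact hle r ⟨hr.1, le_trans hr.2 hs.2⟩

lemma integral_cos_mul' {c : ℝ} (hc : c ≠ 0) (a b : ℝ) :
    ∫ x in a..b, Real.cos (c * x) = (Real.sin (c * b) - Real.sin (c * a)) / c := by
  rw [intervalIntegral.integral_comp_mul_left (fun x => Real.cos x) hc, integral_cos]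
  rw [smul_eq_mul]; field_simp

lemma Qop_const (c : ℝ) : Qop (fun _ => c) = fun t => c * (1 - t^2) / 2 := by
  funext t
  rw [Qop]
  have h1 : ∀ s : ℝ, (∫ r in (0:ℝ)..s, c) = c * s := by
    intro s; rw [intervalIntegral.integral_const, smul_eq_mul]; ring
  simp only [h1]
  rw [intervalIntegral.integral_const_mul, integral_id]
  ring

lemma Qop_cos_pi : Qop (fun t => Real.cos (π/2 * t))
    = fun t => (4/π^2) * Real.cos (π/2 * t) := by
  funext t
  rw [Qop]
  have hc : (π/2 : ℝ) ≠ 0 := by positivity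
  have h1 : ∀ s : ℝ, (∫ r in (0:ℝ)..s, Real.cos (π/2 * r)) = Real.sin (π/2*s) / (π/2) := by
    intro s; rw [integral_cos_mul' hc]; simp
  simp only [h1]
  rw [intervalIntegral.integral_div]
  have h2 : ∫ s in t..(1:ℝ), Real.sin (π/2 * s)
      = (Real.cos (π/2*t) - Real.cos (π/2*1)) / (π/2) := by
    rw [intervalIntegral.integral_comp_mul_left (fun x => Real.sin x) hc, integral_sin]
    rw [smul_eq_mul]; field_simp
  rw [h2]
  rw [mul_one, Real.cos_pi_div_two]
  field_simp
  ring_nf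

lemma Qop_cos_a {a : ℝ} (ha : a ≠ 0) : Qop (fun t => Real.cos (a * t))
    = fun t => (Real.cos (a*t) - Real.cos a) / a^2 := by
  funext t
  rw [Qop]
  have h1 : ∀ s : ℝ, (∫ r in (0:ℝ)..s, Real.cos (a * r)) = Real.sin (a*s) / a := by
    intro s; rw [integral_cos_mul' ha]; simp
  simp only [h1]
  rw [intervalIntegral.integral_div]
  have h2 : ∫ s in t..(1:ℝ), Real.sin (a * s)
      = (Real.cos (a*t) - Real.cos (a*1)) / a := by
    rw [intervalIntegral.integral_comp_mul_left (fun x => Real.sin x) ha, integral_sin]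
    rw [smul_eq_mul]; field_simp
  rw [h2, mul_one]
  rw [div_div, sq]

lemma sq_bound_cos {t : ℝ} (ht : t ∈ Set.Icc (0:ℝ) 1) :
    (1 - t^2) / 2 ≤ Real.cos (π/2 * t) := by
  have h1 : Real.cos (π/2 * t) = Real.sin (π/2 - π/2 * t) := (Real.sin_pi_div_two_sub _).symm
  rw [h1]
  have hx0 : 0 ≤ π/2 - π/2*t := by nlinarith [ht.2, Real.pi_pos]
  have hx1 : π/2 - π/2*t ≤ π/2 := by nlinarith [ht.1, Real.pi_pos]
  have := Real.mul_le_sin hx0 hx1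
  have h2 : 2/π * (π/2 - π/2*t) = 1 - t := by field_simp
  rw [h2] at this
  nlinarith [ht.1, ht.2]

lemma Qop_add_smul {g h : ℝ → ℝ} (hg : Continuous g) (hh : Continuous h) (c : ℝ) :
    Qop (fun t => g t + c * h t) = fun t => Qop g t + c * Qop h t := by
  funext t
  rw [Qop, Qop, Qop]
  have h1 : ∀ s : ℝ, (∫ r in (0:ℝ)..s, (g r + c * h r))
      = (∫ r in (0:ℝ)..s, g r) + c * ∫ r in (0:ℝ)..s, h r := by
    intro s
    rw [intervalIntegral.integral_add (hg.intervalIntegrable _ _)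
      ((hh.intervalIntegrable _ _).const_mul c), intervalIntegral.integral_const_mul]
  simp only [h1]
  have hG : Continuous (fun s => ∫ r in (0:ℝ)..s, g r) :=
    intervalIntegral.continuous_primitive (fun a b => hg.intervalIntegrable a b) 0
  have hHc : Continuous (fun s => ∫ r in (0:ℝ)..s, h r) :=
    intervalIntegral.continuous_primitive (fun a b => hh.intervalIntegrable a b) 0
  rw [intervalIntegral.integral_add (hG.intervalIntegrable _ _)
    ((hHc.intervalIntegrable _ _).const_mul c), intervalIntegral.integral_const_mul]
noncomputable def qfun : ℕ → ℝ → ℝ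
  | 0 => fun _ => 1
  | n+1 => Qop (qfun n)

lemma qfun_cont (n : ℕ) : Continuous (qfun n) := by
  induction n with
  | zero => exact continuous_const
  | succ n ih => exact Qop_cont ih

lemma qfun_even (n : ℕ) : ∀ t, qfun n (-t) = qfun n t := by
  induction n with
  | zero => intro t; rfl
  | succ n ih => intro t; exact Qop_even (qfun_cont n) ih t

lemma qfun_nonneg (n : ℕ) : ∀ t ∈ Set.Icc (0:ℝ) 1, 0 ≤ qfun n t := by
  induction n with
  | zero => intro t _; norm_num [qfun]
  | succ n ih => intro t ht; exact Qop_nonneg (qfun_cont n) ih ht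

lemma Qop_smul (c : ℝ) {h : ℝ → ℝ} (hh : Continuous h) :
    Qop (fun t => c * h t) = fun t => c * Qop h t := by
  have := Qop_add_smul continuous_const hh c (g := fun _ => (0:ℝ))
  simpa [Qop_const] using this

lemma qfun_bound (n : ℕ) : ∀ t ∈ Set.Icc (0:ℝ) 1,
    qfun (n+1) t ≤ (4/π^2)^n * Real.cos (π/2 * t) := by
  induction n with
  | zero =>
    intro t ht
    have : qfun 1 t = (1 - t^2)/2 := by
      show Qop (fun _ => (1:ℝ)) t = _
      rw [Qop_const]; ring
    rw [this, pow_zero, one_mul]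
    exact sq_bound_cos ht
  | succ n ih =>
    intro t ht
    have hcc : Continuous (fun t : ℝ => Real.cos (π/2 * t)) := by continuity
    have hcos : Continuous (fun t => (4/π^2)^n * Real.cos (π/2 * t)) :=
      continuous_const.mul hcc
    have h1 : qfun (n+2) t ≤ Qop (fun t => (4/π^2)^n * Real.cos (π/2 * t)) t :=
      Qop_mono (qfun_cont (n+1)) hcos ih ht
    have h2 : Qop (fun t => (4/π^2)^n * Real.cos (π/2 * t))
        = fun t => (4/π^2)^(n+1) * Real.cos (π/2 * t) := by
      rw [Qop_smul _ hcc]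
      funext t
      rw [congrFun Qop_cos_pi t]; ring
    rw [h2] at h1; exact h1

noncomputable def hfun (a : ℝ) : ℕ → ℝ → ℝ
  | 0 => fun t => Real.cos (a*t) / Real.cos a
  | n+1 => Qop (hfun a n)

lemma hfun_cont (a : ℝ) (n : ℕ) : Continuous (hfun a n) := by
  induction n with
  | zero =>
    show Continuous fun t : ℝ => Real.cos (a*t) / Real.cos a
    have : Continuous fun t : ℝ => Real.cos (a*t) := by continuity
    exact this.div_const _
  | succ n ih => exact Qop_cont ih

lemma hfun_even (a : ℝ) (n : ℕ) : ∀ t, hfun a n (-t) = hfun a n t := by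
  induction n with
  | zero => intro t; simp [hfun, mul_neg, Real.cos_neg]
  | succ n ih => intro t; exact Qop_even (hfun_cont a n) ih t

lemma Qop_sum (N : ℕ) (c : ℕ → ℝ) (f : ℕ → ℝ → ℝ) (hf : ∀ n, Continuous (f n)) :
    Qop (fun t => ∑ n ∈ Finset.range N, c n * f n t)
      = fun t => ∑ n ∈ Finset.range N, c n * Qop (f n) t := by
  induction N with
  | zero => simp [Qop_const (0:ℝ)]
  | succ N ih =>
    have h1 : (fun t => ∑ n ∈ Finset.range (N+1), c n * f n t)
        = fun t => (∑ n ∈ Finset.range N, c n * f n t) + c N * f N t := by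
      funext t; rw [Finset.sum_range_succ]
    rw [h1, Qop_add_smul ?_ (hf N), ih]
    · funext t; rw [Finset.sum_range_succ]
    · exact continuous_finset_sum _ (fun n _ => continuous_const.mul (hf n))

lemma F_eq (a : ℝ) (ha : a ≠ 0) (hcos : Real.cos a ≠ 0) (N : ℕ) :
    (fun t => Real.cos (a*t) / Real.cos a)
      = fun t => (∑ n ∈ Finset.range N, a^(2*n) * qfun n t) + a^(2*N) * hfun a N t := by
  induction N with
  | zero => funext t; simp [hfun]
  | succ N ih =>
    have hQF : Qop (fun t => Real.cos (a*t) / Real.cos a)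
        = fun t => (Real.cos (a*t)/Real.cos a - 1) / a^2 := by
      have h0 : (fun t => Real.cos (a*t) / Real.cos a)
          = fun t => (1/Real.cos a) * Real.cos (a*t) := by funext t; ring
      have hca : Continuous fun t : ℝ => Real.cos (a*t) := by continuity
      rw [h0, Qop_smul _ hca, Qop_cos_a ha]
      funext t; field_simp
    have hstep : (fun t => Real.cos (a*t) / Real.cos a)
        = fun t => 1 + a^2 * Qop (fun t => Real.cos (a*t) / Real.cos a) t := by
      funext t; rw [hQF]; field_simp; ring
    -- apply Qop to ih
    have hih := congrArg Qop ih
    rw [Qop_add_smul ?hc1 (hfun_cont a N) (a^(2*N)), Qop_sum N _ _ qfun_cont] at hih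
    case hc1 => exact continuous_finset_sum _ (fun n _ => continuous_const.mul (qfun_cont n))
    funext t
    rw [congrFun hstep t, congrFun hih t]
    have hq : ∀ n, Qop (qfun n) = qfun (n+1) := fun n => rfl
    simp only [hq]
    have hsum : ∑ n ∈ Finset.range (N+1), a^(2*n) * qfun n t
        = 1 + ∑ n ∈ Finset.range N, a^(2*(n+1)) * qfun (n+1) t := by
      rw [Finset.sum_range_succ']
      simp [qfun]; ring
    rw [hsum]
    have : hfun a (N+1) = Qop (hfun a N) := rfl
    rw [this, mul_add, Finset.mul_sum]
    have e1 : ∀ n : ℕ, a^2 * (a^(2*n) * qfun (n+1) t) = a^(2*(n+1)) * qfun (n+1) t := by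
      intro n; rw [show 2*(n+1) = 2*n+2 by ring, pow_add]; ring
    simp only [e1]
    have e2 : a^2 * (a^(2*N) * Qop (hfun a N) t) = a^(2*(N+1)) * Qop (hfun a N) t := by
      rw [show 2*(N+1) = 2*N+2 by ring, pow_add]; ring
    rw [e2]; ring

lemma cos_a_pos {a : ℝ} (ha2 : |a| < π/2) : 0 < Real.cos a := by
  rcases abs_lt.1 ha2 with ⟨h1, h2⟩
  exact Real.cos_pos_of_mem_Ioo ⟨by linarith, h2⟩

lemma hfun_nonneg (a : ℝ) (ha2 : |a| < π/2) (n : ℕ) :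
    ∀ t ∈ Set.Icc (0:ℝ) 1, 0 ≤ hfun a n t := by
  induction n with
  | zero =>
    intro t ht
    have hca : 0 < Real.cos a := cos_a_pos ha2
    have hct : 0 < Real.cos (a*t) := by
      apply cos_a_pos
      have : |a*t| ≤ |a| := by
        rw [abs_mul]
        calc |a| * |t| ≤ |a| * 1 := by
              apply mul_le_mul_of_nonneg_left _ (abs_nonneg a)
              rw [abs_le]; exact ⟨by linarith [ht.1], ht.2⟩
          _ = |a| := mul_one _
      linarith
    exact div_nonneg hct.le hca.le
  | succ n ih => intro t ht; exact Qop_nonneg (hfun_cont a n) ih ht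

lemma hfun_le_sec (a : ℝ) (ha2 : |a| < π/2) (t : ℝ) :
    hfun a 0 t ≤ 1 / Real.cos a := by
  show Real.cos (a*t) / Real.cos a ≤ 1 / Real.cos a
  have hca : 0 < Real.cos a := cos_a_pos ha2
  gcongr
  exact Real.cos_le_one _

lemma hfun_bound (a : ℝ) (ha2 : |a| < π/2) (n : ℕ) :
    ∀ t ∈ Set.Icc (0:ℝ) 1,
      hfun a (n+1) t ≤ (1/Real.cos a) * ((4/π^2)^n * Real.cos (π/2*t)) := by
  have hca : 0 < Real.cos a := cos_a_pos ha2
  have hcc : Continuous (fun t : ℝ => Real.cos (π/2 * t)) := by continuity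
  induction n with
  | zero =>
    intro t ht
    have h1 : hfun a 1 t ≤ Qop (fun _ => 1/Real.cos a) t := by
      apply Qop_mono (hfun_cont a 0) continuous_const _ ht
      intro s _
      exact hfun_le_sec a ha2 s
    have h2 : Qop (fun _ => 1/Real.cos a) t = (1/Real.cos a) * (1 - t^2)/2 := by
      rw [Qop_const]
    rw [h2] at h1
    refine h1.trans ?_
    rw [pow_zero, one_mul]
    have := sq_bound_cos ht
    have hca' : 0 ≤ 1/Real.cos a := by positivity
    calc 1/Real.cos a * (1 - t^2)/2 = 1/Real.cos a * ((1 - t^2)/2) := by ring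
      _ ≤ 1/Real.cos a * Real.cos (π/2*t) := by
          apply mul_le_mul_of_nonneg_left this hca'
  | succ n ih =>
    intro t ht
    have hb : Continuous (fun t => (1/Real.cos a) * ((4/π^2)^n * Real.cos (π/2*t))) :=
      continuous_const.mul (continuous_const.mul hcc)
    have h1 : hfun a (n+2) t ≤ Qop (fun t => (1/Real.cos a) * ((4/π^2)^n * Real.cos (π/2*t))) t :=
      Qop_mono (hfun_cont a (n+1)) hb ih ht
    have h2 : Qop (fun t => (1/Real.cos a) * ((4/π^2)^n * Real.cos (π/2*t)))
        = fun t => (1/Real.cos a) * ((4/π^2)^(n+1) * Real.cos (π/2*t)) := by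
      have e : (fun t => (1/Real.cos a) * ((4/π^2)^n * Real.cos (π/2*t)))
          = fun t => ((1/Real.cos a) * (4/π^2)^n) * Real.cos (π/2*t) := by
        funext t; ring
      rw [e, Qop_smul _ hcc]
      funext t
      rw [congrFun Qop_cos_pi t]; ring
    rw [h2] at h1
    exact h1

lemma even_ext {g : ℝ → ℝ} (he : ∀ t, g (-t) = g t) {B : ℝ → ℝ} (hB : ∀ t, B (-t) = B t)
    (h : ∀ t ∈ Set.Icc (0:ℝ) 1, g t ≤ B t) :
    ∀ t ∈ Set.Icc (-1:ℝ) 1, g t ≤ B t := by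
  intro t ht
  rcases le_or_gt 0 t with h0 | h0
  · exact h t ⟨h0, ht.2⟩
  · have := h (-t) ⟨by linarith, by linarith [ht.1]⟩
    rw [he t, hB t] at this
    exact this

lemma even_ext_nonneg {g : ℝ → ℝ} (he : ∀ t, g (-t) = g t)
    (h : ∀ t ∈ Set.Icc (0:ℝ) 1, 0 ≤ g t) :
    ∀ t ∈ Set.Icc (-1:ℝ) 1, 0 ≤ g t := by
  intro t ht
  rcases le_or_gt 0 t with h0 | h0
  · exact h t ⟨h0, ht.2⟩
  · have := h (-t) ⟨by linarith, by linarith [ht.1]⟩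
    rw [he t] at this
    exact this

lemma integral_cos_pi_half : ∫ t in (-1:ℝ)..1, Real.cos (π/2 * t) = 4/π := by
  have hc : (π/2 : ℝ) ≠ 0 := by positivity
  rw [integral_cos_mul' hc]
  have h1 : π/2 * 1 = π/2 := mul_one _
  have h2 : π/2 * (-1 : ℝ) = -(π/2) := by ring
  rw [h1, h2, Real.sin_neg, Real.sin_pi_div_two]
  field_simp
  ring

lemma J_nonneg (n : ℕ) : 0 ≤ ∫ t in (-1:ℝ)..1, qfun n t := by
  apply intervalIntegral.integral_nonneg (by norm_num)
  exact even_ext_nonneg (qfun_even n) (qfun_nonneg n)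

lemma J_le (n : ℕ) : (∫ t in (-1:ℝ)..1, qfun n t) ≤ π * (4/π^2)^n := by
  have hπ := Real.pi_pos
  cases n with
  | zero =>
    have : (∫ t in (-1:ℝ)..1, qfun 0 t) = 2 := by
      show (∫ t in (-1:ℝ)..1, (1:ℝ)) = 2
      rw [intervalIntegral.integral_const]; norm_num
    rw [this, pow_zero, mul_one]
    linarith [Real.two_le_pi]
  | succ n =>
    have hcc : Continuous (fun t : ℝ => (4/π^2)^n * Real.cos (π/2 * t)) := by continuity
    have hmono : (∫ t in (-1:ℝ)..1, qfun (n+1) t)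
        ≤ ∫ t in (-1:ℝ)..1, (4/π^2)^n * Real.cos (π/2 * t) := by
      apply intervalIntegral.integral_mono_on (by norm_num)
        ((qfun_cont (n+1)).intervalIntegrable _ _) (hcc.intervalIntegrable _ _)
      apply even_ext (qfun_even (n+1)) _ (qfun_bound n)
      intro t; rw [mul_neg, Real.cos_neg]
    have hval : (∫ t in (-1:ℝ)..1, (4/π^2)^n * Real.cos (π/2 * t))
        = (4/π^2)^n * (4/π) := by
      rw [intervalIntegral.integral_const_mul, integral_cos_pi_half]
    rw [hval] at hmono
    refine hmono.trans_eq ?_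
    rw [pow_succ ((4:ℝ)/π^2) n, mul_left_comm]; congr 1
    field_simp

lemma H_nonneg (a : ℝ) (ha2 : |a| < π/2) (n : ℕ) :
    0 ≤ ∫ t in (-1:ℝ)..1, hfun a n t := by
  apply intervalIntegral.integral_nonneg (by norm_num)
  exact even_ext_nonneg (hfun_even a n) (hfun_nonneg a ha2 n)

lemma H_le (a : ℝ) (ha2 : |a| < π/2) (n : ℕ) :
    (∫ t in (-1:ℝ)..1, hfun a n t) ≤ (1/Real.cos a) * (π * (4/π^2)^n) := by
  have hπ := Real.pi_pos
  have hca := cos_a_pos ha2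
  cases n with
  | zero =>
    have hmono : (∫ t in (-1:ℝ)..1, hfun a 0 t) ≤ ∫ t in (-1:ℝ)..1, (1/Real.cos a) := by
      apply intervalIntegral.integral_mono_on (by norm_num)
        ((hfun_cont a 0).intervalIntegrable _ _) (intervalIntegrable_const)
      intro t _
      exact hfun_le_sec a ha2 t
    rw [intervalIntegral.integral_const] at hmono
    refine hmono.trans ?_
    rw [pow_zero, mul_one]
    have h2 : (2:ℝ) ≤ π := Real.two_le_pi
    rw [smul_eq_mul]
    calc ((1:ℝ) - -1) * (1/Real.cos a) = 2 * (1/Real.cos a) := by norm_num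
      _ ≤ π * (1/Real.cos a) := by
          apply mul_le_mul_of_nonneg_right h2 (by positivity)
      _ = 1/Real.cos a * π := by ring
  | succ n =>
    have hcc : Continuous (fun t : ℝ => (1/Real.cos a) * ((4/π^2)^n * Real.cos (π/2 * t))) := by
      continuity
    have hmono : (∫ t in (-1:ℝ)..1, hfun a (n+1) t)
        ≤ ∫ t in (-1:ℝ)..1, (1/Real.cos a) * ((4/π^2)^n * Real.cos (π/2 * t)) := by
      apply intervalIntegral.integral_mono_on (by norm_num)
        ((hfun_cont a (n+1)).intervalIntegrable _ _) (hcc.intervalIntegrable _ _)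
      apply even_ext (hfun_even a (n+1)) _ (hfun_bound a ha2 n)
      intro t; rw [mul_neg, Real.cos_neg]
    have hval : (∫ t in (-1:ℝ)..1, (1/Real.cos a) * ((4/π^2)^n * Real.cos (π/2 * t)))
        = (1/Real.cos a) * ((4/π^2)^n * (4/π)) := by
      rw [intervalIntegral.integral_const_mul, intervalIntegral.integral_const_mul,
        integral_cos_pi_half]
    rw [hval] at hmono
    refine hmono.trans ?_
    apply mul_le_mul_of_nonneg_left _ (by positivity)
    rw [pow_succ ((4:ℝ)/π^2) n]
    apply le_of_eq
    rw [mul_left_comm]; congr 1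
    field_simp

lemma key_hasSum (a : ℝ) (ha2 : |a| < π/2) :
    HasSum (fun n => a^(2*n+1) * ∫ t in (-1:ℝ)..1, qfun n t) (2 * Real.tan a) := by
  have hπ := Real.pi_pos
  rcases eq_or_ne a 0 with rfl | ha
  · have : (fun n : ℕ => (0:ℝ)^(2*n+1) * ∫ t in (-1:ℝ)..1, qfun n t) = fun _ => 0 := by
      funext n; rw [zero_pow (by omega)]; ring
    rw [this, Real.tan_zero, mul_zero]
    exact hasSum_zero
  · have hca := cos_a_pos ha2
    set r : ℝ := a^2 * (4/π^2) with hr_def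
    have hr0 : 0 ≤ r := by positivity
    have hr1 : r < 1 := by
      have h1 : a^2 < (π/2)^2 := by
        have := abs_lt.1 ha2
        nlinarith [abs_nonneg a, sq_abs a, this.1, this.2]
      have h2 : ((π/2)^2) * (4/π^2) = 1 := by field_simp; ring
      calc r = a^2 * (4/π^2) := hr_def
        _ < ((π/2)^2) * (4/π^2) := mul_lt_mul_of_pos_right h1 (by positivity)
        _ = 1 := h2
    set f : ℕ → ℝ := fun n => a^(2*n+1) * ∫ t in (-1:ℝ)..1, qfun n t with hf_def
    have habs : ∀ n, |f n| ≤ (|a| * π) * r^n := by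
      intro n
      have hJ0 := J_nonneg n
      have hJ1 := J_le n
      have e0 : |f n| = |a|^(2*n+1) * ∫ t in (-1:ℝ)..1, qfun n t := by
        rw [hf_def, abs_mul, abs_pow, abs_of_nonneg hJ0]
      have e1 : |a|^(2*n+1) * (π * (4/π^2)^n) = (|a| * π) * r^n := by
        rw [hr_def, mul_pow, pow_succ, pow_mul, sq_abs]
        ring
      rw [e0, ← e1]
      exact mul_le_mul_of_nonneg_left hJ1 (by positivity)
    have hsummable : Summable f := by
      apply Summable.of_abs
      apply Summable.of_nonneg_of_le (fun n => abs_nonneg _) habs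
      exact (summable_geometric_of_lt_one hr0 hr1).mul_left _
    -- partial sums
    have hcc_at : Continuous (fun t : ℝ => Real.cos (a*t)) := by continuity
    have hFint : ∫ t in (-1:ℝ)..1, Real.cos (a*t) / Real.cos a
        = 2 * Real.sin a / (a * Real.cos a) := by
      have : (fun t : ℝ => Real.cos (a*t) / Real.cos a)
          = fun t : ℝ => (1/Real.cos a) * Real.cos (a*t) := by funext t; ring
      rw [this, intervalIntegral.integral_const_mul, integral_cos_mul' ha]
      rw [mul_one, show a * (-1:ℝ) = -a by ring, Real.sin_neg]
      field_simp
      ring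
    have hpartial : ∀ N : ℕ, ∑ n ∈ Finset.range N, f n
        = 2 * Real.sin a / Real.cos a - a^(2*N+1) * ∫ t in (-1:ℝ)..1, hfun a N t := by
      intro N
      have hfe : ∀ n, f n = a * ∫ t in (-1:ℝ)..1, a^(2*n) * qfun n t := by
        intro n
        simp only [hf_def]
        rw [intervalIntegral.integral_const_mul, pow_succ]
        ring
      have hsum1 : ∑ n ∈ Finset.range N, f n
          = a * ∫ t in (-1:ℝ)..1, ∑ n ∈ Finset.range N, a^(2*n) * qfun n t := by
        rw [intervalIntegral.integral_finset_sum]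
        · rw [Finset.mul_sum]
          exact Finset.sum_congr rfl fun n _ => hfe n
        · intro n _
          exact (continuous_const.mul (qfun_cont n)).intervalIntegrable _ _
      have hgN : ∀ t : ℝ, ∑ n ∈ Finset.range N, a^(2*n) * qfun n t
          = Real.cos (a*t)/Real.cos a - a^(2*N) * hfun a N t := by
        intro t
        have := congrFun (F_eq a ha hca.ne' N) t
        linarith [this]
      have hsum2 : (∫ t in (-1:ℝ)..1, ∑ n ∈ Finset.range N, a^(2*n) * qfun n t)
          = (∫ t in (-1:ℝ)..1, Real.cos (a*t)/Real.cos a)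
            - a^(2*N) * ∫ t in (-1:ℝ)..1, hfun a N t := by
        have he : (fun t => ∑ n ∈ Finset.range N, a^(2*n) * qfun n t)
            = fun t => Real.cos (a*t)/Real.cos a - a^(2*N) * hfun a N t := funext hgN
        rw [he, intervalIntegral.integral_sub, intervalIntegral.integral_const_mul]
        · exact (hcc_at.div_const _).intervalIntegrable _ _
        · exact (continuous_const.mul (hfun_cont a N)).intervalIntegrable _ _
      rw [hsum1, hsum2, hFint]
      have : a * (2 * Real.sin a / (a * Real.cos a)) = 2 * Real.sin a / Real.cos a := by
        field_simp
      rw [mul_sub, this, pow_succ]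
      ring
    -- remainder tends to zero
    have hrem : Filter.Tendsto (fun N => a^(2*N+1) * ∫ t in (-1:ℝ)..1, hfun a N t)
        Filter.atTop (nhds 0) := by
      have hbound : ∀ N : ℕ, ‖a^(2*N+1) * ∫ t in (-1:ℝ)..1, hfun a N t‖
          ≤ ((|a| * π)/Real.cos a) * r^N := by
        intro N
        have hH0 := H_nonneg a ha2 N
        have hH1 := H_le a ha2 N
        have e0 : ‖a^(2*N+1) * ∫ t in (-1:ℝ)..1, hfun a N t‖
            = |a|^(2*N+1) * ∫ t in (-1:ℝ)..1, hfun a N t := by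
          rw [Real.norm_eq_abs, abs_mul, abs_pow, abs_of_nonneg hH0]
        rw [e0]
        calc |a|^(2*N+1) * ∫ t in (-1:ℝ)..1, hfun a N t
            ≤ |a|^(2*N+1) * ((1/Real.cos a) * (π * (4/π^2)^N)) :=
              mul_le_mul_of_nonneg_left hH1 (by positivity)
          _ = ((|a| * π)/Real.cos a) * r^N := by
              rw [hr_def, mul_pow, pow_succ, pow_mul, sq_abs]
              ring
      have hg : Filter.Tendsto (fun N : ℕ => ((|a| * π)/Real.cos a) * r^N)
          Filter.atTop (nhds 0) := by
        have := (tendsto_pow_atTop_nhds_zero_of_lt_one hr0 hr1).const_mul ((|a| * π)/Real.cos a)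
        simpa using this
      exact squeeze_zero_norm hbound hg
    have hlim : Filter.Tendsto (fun N => ∑ n ∈ Finset.range N, f n)
        Filter.atTop (nhds (2 * Real.tan a)) := by
      have he : (fun N => ∑ n ∈ Finset.range N, f n)
          = fun N => 2 * Real.sin a / Real.cos a
              - a^(2*N+1) * ∫ t in (-1:ℝ)..1, hfun a N t := funext hpartial
      rw [he]
      have h0 : 2 * Real.tan a = 2 * Real.sin a / Real.cos a - 0 := by
        rw [Real.tan_eq_sin_div_cos]; ring
      rw [h0]
      exact Filter.Tendsto.sub tendsto_const_nhds hrem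
    have := hsummable.hasSum
    have huniq := tendsto_nhds_unique (hsummable.hasSum.tendsto_sum_nat) hlim
    rw [← huniq]
    exact hsummable.hasSum

noncomputable def chi : ℝ → ℝ := Set.indicator (Set.Ioo (-1:ℝ) 1) (fun _ => (1:ℝ))

lemma chi_mem {t : ℝ} (ht : t ∈ Set.Ioo (-1:ℝ) 1) : chi t = 1 := Set.indicator_of_mem ht _
lemma chi_not {t : ℝ} (ht : t ∉ Set.Ioo (-1:ℝ) 1) : chi t = 0 := Set.indicator_of_notMem ht _

lemma measurable_real_sign : Measurable Real.sign := by
  have : Real.sign = fun r : ℝ => if r < 0 then (-1:ℝ) else if 0 < r then 1 else 0 := by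
    funext r; rfl
  rw [this]
  exact Measurable.ite (measurableSet_lt measurable_id measurable_const) measurable_const
    (Measurable.ite (measurableSet_lt measurable_const measurable_id) measurable_const
      measurable_const)

lemma abs_real_sign (x : ℝ) : |Real.sign x| ≤ 1 := by
  rcases Real.sign_apply_eq x with h | h | h <;> rw [h] <;> norm_num

lemma ae_ne_const (t : ℝ) : ∀ᵐ (s : ℝ), s ≠ t := by
  rw [MeasureTheory.ae_iff]
  simp only [not_not, Set.setOf_eq_eq_singleton]
  exact measure_singleton t

lemma Kstep (c sgn a : ℝ) (hca : c^2 * sgn = a) (g : ℝ → ℝ) (hg : Continuous g)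
    (w : ℂ) (t : ℝ) :
    Kop (fun x => c * chi x) (fun x => sgn * (c * chi x))
      (fun s => w * ((chi s * g s : ℝ) : ℂ)) t
      = (Complex.I * a * w) *
        ((chi t * ((1/2) * ((∫ s in (-1:ℝ)..t, g s) - ∫ s in t..(1:ℝ), g s)) : ℝ) : ℂ) := by
  by_cases ht : t ∈ Set.Ioo (-1:ℝ) 1
  · -- main case
    have hchit : chi t = 1 := chi_mem ht
    set h : ℝ → ℝ := fun s => Real.sign (t - s) * g s with hh_def
    have hmeas : Measurable h :=
      (measurable_real_sign.comp (measurable_const.sub measurable_id)).mul hg.measurable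
    have hII : ∀ p q : ℝ, IntervalIntegrable h volume p q := by
      intro p q
      apply IntervalIntegrable.mono_fun (hg.intervalIntegrable p q)
        hmeas.aestronglyMeasurable
      filter_upwards with s
      rw [Real.norm_eq_abs, Real.norm_eq_abs, hh_def, abs_mul]
      calc |Real.sign (t - s)| * |g s| ≤ 1 * |g s| :=
            mul_le_mul_of_nonneg_right (abs_real_sign _) (abs_nonneg _)
        _ = |g s| := one_mul _
    -- integrand rewrite
    have hca' : (c:ℂ)^2 * (sgn:ℂ) = (a:ℂ) := by exact_mod_cast hca
    have hint : (fun s => (((c * chi t) * Real.sign (t - s) * (sgn * (c * chi s)) : ℝ) : ℂ)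
          * (w * ((chi s * g s : ℝ) : ℂ)))
        = fun s => (w * (a:ℂ)) * ((Set.indicator (Set.Ioo (-1:ℝ) 1) h s : ℝ) : ℂ) := by
      funext s
      by_cases hs : s ∈ Set.Ioo (-1:ℝ) 1
      · rw [chi_mem hs, hchit, Set.indicator_of_mem hs]
        push_cast
        rw [hh_def]
        push_cast
        linear_combination (w * (Real.sign (t - s) : ℂ) * (g s : ℂ)) * hca'
      · rw [chi_not hs, Set.indicator_of_notMem hs]
        push_cast
        ring
    have hreal : ∫ s, Set.indicator (Set.Ioo (-1:ℝ) 1) h s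
        = (∫ s in (-1:ℝ)..t, g s) - ∫ s in t..(1:ℝ), g s := by
      rw [MeasureTheory.integral_indicator measurableSet_Ioo]
      rw [← MeasureTheory.integral_Ioc_eq_integral_Ioo,
        ← intervalIntegral.integral_of_le (by linarith [ht.1, ht.2] : (-1:ℝ) ≤ 1)]
      rw [← intervalIntegral.integral_add_adjacent_intervals (hII (-1) t) (hII t 1)]
      have h1 : ∫ s in (-1:ℝ)..t, h s = ∫ s in (-1:ℝ)..t, g s := by
        apply intervalIntegral.integral_congr_ae
        filter_upwards [ae_ne_const t] with s hst hsmem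
        rw [Set.uIoc_of_le (by linarith [ht.1] : (-1:ℝ) ≤ t)] at hsmem
        have : 0 < t - s := by
          rcases lt_or_eq_of_le hsmem.2 with h' | h'
          · linarith
          · exact absurd h' hst
        rw [hh_def]
        simp only
        rw [Real.sign_of_pos this, one_mul]
      have h2 : ∫ s in t..(1:ℝ), h s = ∫ s in t..(1:ℝ), (-g s) := by
        apply intervalIntegral.integral_congr_ae
        filter_upwards with s hsmem
        rw [Set.uIoc_of_le (by linarith [ht.2] : t ≤ 1)] at hsmem
        have : t - s < 0 := by linarith [hsmem.1]
        rw [hh_def]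
        simp only
        rw [Real.sign_of_neg this]
        ring
      rw [h1, h2, intervalIntegral.integral_neg]
      ring
    rw [Kop]
    rw [hint, MeasureTheory.integral_const_mul, hchit]
    have hcast : ∫ (s:ℝ), ((Set.indicator (Set.Ioo (-1:ℝ) 1) h s : ℝ) : ℂ)
        = (((∫ s, Set.indicator (Set.Ioo (-1:ℝ) 1) h s) : ℝ) : ℂ) :=
      _root_.integral_ofReal
    rw [hcast, hreal]
    push_cast
    ring
  · -- t outside
    have hchit : chi t = 0 := chi_not ht
    rw [Kop]
    simp only [hchit]
    have hzero : (fun s => (((c * 0) * Real.sign (t - s) * (sgn * (c * chi s)) : ℝ) : ℂ)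
        * (w * ((chi s * g s : ℝ) : ℂ))) = fun _ => (0:ℂ) := by
      funext s; push_cast; ring
    rw [hzero, MeasureTheory.integral_zero]
    push_cast
    ring

lemma Teven {g : ℝ → ℝ} (hg : Continuous g) (he : ∀ t, g (-t) = g t) (t : ℝ) :
    (1/2) * ((∫ s in (-1:ℝ)..t, g s) - ∫ s in t..(1:ℝ), g s) = ∫ r in (0:ℝ)..t, g r := by
  have h1 : ∫ s in (-1:ℝ)..t, g s = (∫ s in (-1:ℝ)..0, g s) + ∫ s in (0:ℝ)..t, g s :=
    (intervalIntegral.integral_add_adjacent_intervals (hg.intervalIntegrable _ _)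
      (hg.intervalIntegrable _ _)).symm
  have h2 : ∫ s in t..(1:ℝ), g s = (∫ s in t..0, g s) + ∫ s in (0:ℝ)..1, g s :=
    (intervalIntegral.integral_add_adjacent_intervals (hg.intervalIntegrable _ _)
      (hg.intervalIntegrable _ _)).symm
  have h3 : ∫ s in (-1:ℝ)..0, g s = ∫ s in (0:ℝ)..1, g s := by
    have h := intervalIntegral.integral_comp_neg (a := (0:ℝ)) (b := 1) g
    rw [neg_zero] at h
    have h2' : (fun x => g (-x)) = g := funext he
    rw [h2'] at h
    rw [← h]
  have h4 : ∫ s in t..(0:ℝ), g s = -∫ s in (0:ℝ)..t, g s := intervalIntegral.integral_symm _ _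
  rw [h1, h2, h3, h4]
  ring

lemma Todd {G : ℝ → ℝ} (hG : Continuous G) (ho : ∀ t, G (-t) = -G t) (t : ℝ) :
    (1/2) * ((∫ s in (-1:ℝ)..t, G s) - ∫ s in t..(1:ℝ), G s) = -∫ s in t..(1:ℝ), G s := by
  have hz : ∫ s in (-1:ℝ)..1, G s = 0 := by
    have h := intervalIntegral.integral_comp_neg (a := (-1:ℝ)) (b := 1) G
    rw [neg_neg] at h
    have h2' : (fun x => G (-x)) = fun x => -G x := funext ho
    rw [h2', intervalIntegral.integral_neg] at h
    linarith
  have h1 : (∫ s in (-1:ℝ)..t, G s) + ∫ s in t..(1:ℝ), G s = 0 := by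
    rw [intervalIntegral.integral_add_adjacent_intervals (hG.intervalIntegrable _ _)
      (hG.intervalIntegrable _ _)]
    exact hz
  linarith

lemma Kstep2 (c sgn a : ℝ) (hca : c^2 * sgn = a) (g : ℝ → ℝ) (hg : Continuous g)
    (he : ∀ t, g (-t) = g t) (w : ℝ) :
    Kop (fun x => c * chi x) (fun x => sgn * (c * chi x))
      (Kop (fun x => c * chi x) (fun x => sgn * (c * chi x))
        (fun s => ((w * (chi s * g s) : ℝ) : ℂ)))
    = fun t => ((a^2 * w * (chi t * Qop g t) : ℝ) : ℂ) := by
  set G : ℝ → ℝ := fun s => ∫ r in (0:ℝ)..s, g r with hG_def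
  have hGc : Continuous G :=
    intervalIntegral.continuous_primitive (fun a b => hg.intervalIntegrable a b) 0
  have hGo : ∀ s, G (-s) = -G s := fun s => primitive_odd he s
  have hin : (fun s => ((w * (chi s * g s) : ℝ) : ℂ))
      = fun s => ((w:ℂ)) * ((chi s * g s : ℝ) : ℂ) := by
    funext s; push_cast; ring
  have h1 : Kop (fun x => c * chi x) (fun x => sgn * (c * chi x))
      (fun s => ((w:ℂ)) * ((chi s * g s : ℝ) : ℂ))
      = fun t => (Complex.I * a * w) * ((chi t * G t : ℝ) : ℂ) := by
    funext t
    rw [Kstep c sgn a hca g hg w t, Teven hg he t]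
  rw [hin, h1]
  funext t
  rw [Kstep c sgn a hca G hGc (Complex.I * a * w) t, Todd hGc hGo t]
  have hq : Qop g t = ∫ s in t..(1:ℝ), G s := rfl
  rw [hq]
  push_cast
  linear_combination (-(a:ℂ)^2 * (w:ℂ) * ((chi t : ℂ) *
    ((∫ s in t..(1:ℝ), G s : ℝ) : ℂ))) * Complex.I_mul_I

theorem stmt3 (η τ : ℝ) (hη : 0 < η) (hsmall : |τ| * η < Real.pi)
    (V u v : ℝ → ℝ)
    (hV : V = fun t => (τ / 2) * Set.indicator (Set.Ioo (-η) η) (fun _ => (1 : ℝ)) t)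
    (hu : u = fun t => Real.sqrt |η * V (η * t)|)
    (hv : v = fun t => Real.sign (V (η * t)) * u t) :
    ∑' n : ℕ, ∫ t, (v t : ℂ) * ((Kop u v)^[2 * n] (fun s => (u s : ℂ))) t
      = 2 * Real.tan (τ * η / 2) := by
  set sgn : ℝ := Real.sign τ with hsgn_def
  set c : ℝ := Real.sqrt (η * |τ| / 2) with hc_def
  set a : ℝ := τ * η / 2 with ha_def
  have hc2 : c^2 = η * |τ| / 2 := Real.sq_sqrt (by positivity)
  have hsgnabs : sgn * |τ| = τ := by
    rcases lt_trichotomy τ 0 with h | h | h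
    · rw [hsgn_def, Real.sign_of_neg h, abs_of_neg h]; ring
    · rw [h]; simp
    · rw [hsgn_def, Real.sign_of_pos h, abs_of_pos h]; ring
  have hca : c^2 * sgn = a := by
    rw [hc2, ha_def]
    linear_combination (η / 2) * hsgnabs
  have hmem : ∀ t : ℝ, (η * t ∈ Set.Ioo (-η) η) ↔ t ∈ Set.Ioo (-1:ℝ) 1 := by
    intro t
    rw [Set.mem_Ioo, Set.mem_Ioo]
    constructor
    · rintro ⟨h1, h2⟩
      constructor
      · have := lt_of_mul_lt_mul_left (show η * (-1) < η * t by linarith) hη.le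
        linarith
      · have := lt_of_mul_lt_mul_left (show η * t < η * 1 by linarith) hη.le
        linarith
    · rintro ⟨h1, h2⟩
      constructor
      · nlinarith
      · nlinarith
  have hu' : u = fun t => c * chi t := by
    funext t
    rw [hu]
    simp only
    rw [hV]
    simp only
    by_cases htm : t ∈ Set.Ioo (-1:ℝ) 1
    · rw [chi_mem htm, Set.indicator_of_mem ((hmem t).2 htm)]
      have e : |η * (τ / 2 * 1)| = η * |τ| / 2 := by
        rw [mul_one, abs_mul, abs_of_pos hη, abs_div, abs_two]
        ring
      rw [e, mul_one]
    · rw [chi_not htm, Set.indicator_of_notMem (fun h => htm ((hmem t).1 h))]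
      simp
  have hv' : v = fun t => sgn * (c * chi t) := by
    funext t
    rw [hv]
    simp only
    by_cases htm : t ∈ Set.Ioo (-1:ℝ) 1
    · rw [hV]
      simp only [Set.indicator_of_mem ((hmem t).2 htm), mul_one]
      have hsign : Real.sign (τ / 2) = sgn := by
        rcases lt_trichotomy τ 0 with h | h | h
        · rw [Real.sign_of_neg (by linarith), hsgn_def, Real.sign_of_neg h]
        · rw [h, hsgn_def, h, Real.sign_zero]; norm_num [Real.sign_zero]
        · rw [Real.sign_of_pos (by linarith), hsgn_def, Real.sign_of_pos h]
      rw [hsign, congrFun hu' t]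
    · rw [congrFun hu' t, chi_not htm]
      ring
  -- iterate formula
  have hiter : ∀ n : ℕ, (Kop u v)^[2*n] (fun s => ((u s : ℝ) : ℂ))
      = fun t => ((a^(2*n) * c * (chi t * qfun n t) : ℝ) : ℂ) := by
    intro n
    induction n with
    | zero =>
      simp only [Nat.mul_zero, Function.iterate_zero, id_eq]
      funext s
      rw [congrFun hu' s]
      have : qfun 0 s = 1 := rfl
      rw [pow_zero]
      push_cast [this]
      ring
    | succ n ih =>
      rw [show 2*(n+1) = 2 + 2*n by ring, Function.iterate_add_apply]
      have h2 : (Kop u v)^[2] ((Kop u v)^[2*n] (fun s => ((u s : ℝ) : ℂ)))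
          = Kop u v (Kop u v ((Kop u v)^[2*n] (fun s => ((u s : ℝ) : ℂ)))) := rfl
      rw [h2, ih, hu', hv']
      have := Kstep2 c sgn a hca (qfun n) (qfun_cont n) (qfun_even n) (a^(2*n) * c)
      have harg : (fun t => ((a^(2*n) * c * (chi t * qfun n t) : ℝ) : ℂ))
          = fun s => ((a^(2*n) * c * (chi s * qfun n s) : ℝ) : ℂ) := rfl
      rw [harg, this]
      funext t
      have hq : Qop (qfun n) = qfun (n+1) := rfl
      rw [hq]
      have e : a^2 * (a^(2*n) * c) = a^(2*(n+1)) * c := by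
        rw [show 2*(n+1) = 2*n+2 by ring, pow_add]
        ring
      rw [e, show 2 + 2*n = 2*(n+1) by omega]
  -- term formula
  have hterm : ∀ n : ℕ, (∫ t, (v t : ℂ) * ((Kop u v)^[2 * n] (fun s => (u s : ℂ))) t)
      = ((a^(2*n+1) * ∫ t in (-1:ℝ)..1, qfun n t : ℝ) : ℂ) := by
    intro n
    rw [hiter n]
    have hca' : (c:ℂ)^2 * (sgn:ℂ) = (a:ℂ) := by exact_mod_cast hca
    have hfun : (fun t => (v t : ℂ) * ((a^(2*n) * c * (chi t * qfun n t) : ℝ) : ℂ))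
        = fun t => ((a^(2*n+1) : ℝ) : ℂ)
          * ((Set.indicator (Set.Ioo (-1:ℝ) 1) (qfun n) t : ℝ) : ℂ) := by
      funext t
      rw [congrFun hv' t]
      by_cases htm : t ∈ Set.Ioo (-1:ℝ) 1
      · rw [chi_mem htm, Set.indicator_of_mem htm]
        push_cast
        linear_combination ((a:ℂ))^(2*n) * ((qfun n t : ℝ) : ℂ) * hca'
      · rw [chi_not htm, Set.indicator_of_notMem htm]
        push_cast
        ring
    rw [hfun, MeasureTheory.integral_const_mul]
    have hcast : ∫ (t:ℝ), ((Set.indicator (Set.Ioo (-1:ℝ) 1) (qfun n) t : ℝ) : ℂ)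
        = (((∫ t, Set.indicator (Set.Ioo (-1:ℝ) 1) (qfun n) t) : ℝ) : ℂ) :=
      _root_.integral_ofReal
    rw [hcast, MeasureTheory.integral_indicator measurableSet_Ioo,
      ← MeasureTheory.integral_Ioc_eq_integral_Ioo,
      ← intervalIntegral.integral_of_le (by norm_num : (-1:ℝ) ≤ 1)]
    push_cast
    ring
  -- conclude
  have ha2 : |a| < π/2 := by
    rw [ha_def]
    rw [abs_div, abs_mul, abs_of_pos hη, abs_two]
    rw [div_lt_div_iff₀ (by norm_num) (by norm_num)]
    linarith [hsmall]
  have hkey := key_hasSum a ha2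
  have hC : HasSum (fun n : ℕ => ((a^(2*n+1) * ∫ t in (-1:ℝ)..1, qfun n t : ℝ) : ℂ))
      (((2 * Real.tan a : ℝ) : ℂ)) := by
    have := hkey.mapL Complex.ofRealCLM
    simpa using this
  have hfuneq : (fun n : ℕ => ∫ t, (v t : ℂ) * ((Kop u v)^[2 * n] (fun s => (u s : ℂ))) t)
      = fun n : ℕ => ((a^(2*n+1) * ∫ t in (-1:ℝ)..1, qfun n t : ℝ) : ℂ) := funext hterm
  rw [hfuneq, hC.tsum_eq]
  push_cast
  ring
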